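/- For every natural number k, the probability that a measurement of the state G^k u yields a marked element equals sin²((2k+1)θ); that is, ∑_{i ∈ M} ((G^k u)_i)² = sin²((2k+1)θ). -/

import Mathlib

open Real

/-- The probability that a measurement of the state `G^k u` yields a marked
element equals `sin²((2k+1)θ)`. -/
theorem grover_success_probability
    (N : ℕ) (hN : 0 < N) (M : Finset (Fin N)) (hM : M.Nonempty) (hMN : M.card < N)
    (u : EuclideanSpace ℝ (Fin N))
    (hu : ∀ i, u i = 1 / Real.sqrt N)
    (θ : ℝ) (hθ : θ = Real.arcsin (Real.sqrt (M.card / N)))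
    (O D : EuclideanSpace ℝ (Fin N) →ₗ[ℝ] EuclideanSpace ℝ (Fin N))
    (hO : ∀ x, ∀ i, O x i = if i ∈ M then -x i else x i)
    (hD : ∀ x, D x = (2 * (inner ℝ u x : ℝ)) • u - x) :
    ∀ k : ℕ, ∑ i ∈ M, ((⇑D ∘ ⇑O)^[k] u i) ^ 2 =
      Real.sin ((2 * k + 1) * θ) ^ 2 := by
  set m : ℝ := (M.card : ℝ) with hm_def
  have hm0 : 0 < m := by
    have := hM.card_pos
    simp only [hm_def]
    exact_mod_cast this
  have hNR : (0:ℝ) < N := by exact_mod_cast hN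
  have hmN : m < N := by simp only [hm_def]; exact_mod_cast hMN
  set sm : ℝ := Real.sqrt m with hsm_def
  set sn : ℝ := Real.sqrt ((N:ℝ) - m) with hsn_def
  set sN : ℝ := Real.sqrt N with hsN_def
  have hsm : 0 < sm := Real.sqrt_pos.mpr hm0
  have hsn : 0 < sn := Real.sqrt_pos.mpr (by linarith)
  have hsN : 0 < sN := Real.sqrt_pos.mpr hNR
  have hsm2 : sm ^ 2 = m := Real.sq_sqrt hm0.le
  have hsn2 : sn ^ 2 = (N:ℝ) - m := Real.sq_sqrt (by linarith)
  have hsN2 : sN ^ 2 = N := Real.sq_sqrt hNR.le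
  have hdivle : Real.sqrt (m / N) ≤ 1 := by
    rw [show (1:ℝ) = Real.sqrt 1 by simp]
    exact Real.sqrt_le_sqrt (by rw [div_le_one hNR]; linarith)
  have hsin : Real.sin θ = sm / sN := by
    rw [hθ, Real.sin_arcsin (le_trans (by norm_num) (Real.sqrt_nonneg _)) hdivle,
      hsm_def, hsN_def, Real.sqrt_div hm0.le]
  have hcos : Real.cos θ = sn / sN := by
    rw [hθ, Real.cos_arcsin,
      Real.sq_sqrt (div_nonneg hm0.le hNR.le),
      show 1 - m / N = ((N:ℝ) - m) / N by field_simp,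
      hsn_def, hsN_def, Real.sqrt_div (by linarith)]
  have hsmeq : sm = sN * Real.sin θ := by rw [hsin]; field_simp
  have hsneq : sn = sN * Real.cos θ := by rw [hcos]; field_simp
  have hsθ : (0:ℝ) < Real.sin θ := by rw [hsin]; positivity
  have hcθ : (0:ℝ) < Real.cos θ := by rw [hcos]; positivity
  have hpyth := Real.sin_sq_add_cos_sq θ
  -- key: the state after k iterations
  have key : ∀ k : ℕ, ∀ i : Fin N, (⇑D ∘ ⇑O)^[k] u i =
      if i ∈ M then Real.sin ((2 * k + 1) * θ) / sm
      else Real.cos ((2 * k + 1) * θ) / sn := by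
    intro k
    induction k with
    | zero =>
      intro i
      simp only [Function.iterate_zero, id_eq, hu i]
      rw [show (2 * (0:ℕ) + 1 : ℝ) * θ = θ by push_cast; ring]
      rw [hsin, hcos]
      split <;> field_simp
    | succ k ih =>
      intro i
      set x := (⇑D ∘ ⇑O)^[k] u with hx
      have hstep : (⇑D ∘ ⇑O)^[k+1] u = D (O x) := by
        rw [Function.iterate_succ_apply']; rfl
      set S := Real.sin ((2 * k + 1) * θ) with hS
      set C := Real.cos ((2 * k + 1) * θ) with hC
      -- compute the inner product
      have hOx : ∀ j, O x j = if j ∈ M then -(S / sm) else C / sn := by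
        intro j
        rw [hO x j, ih j]
        split <;> simp
      have hinner : (inner ℝ u (O x) : ℝ) =
          (1 / sN) * (-(m * (S / sm)) + ((N:ℝ) - m) * (C / sn)) := by
        have : (inner ℝ u (O x) : ℝ) = ∑ j, u j * O x j := by
          simp [PiLp.inner_apply, RCLike.inner_apply, mul_comm]
        rw [this]
        rw [← Finset.sum_add_sum_compl M]
        have h1 : ∑ j ∈ M, u j * O x j = m * ((1 / sN) * (-(S / sm))) := by
          rw [Finset.sum_congr rfl fun j hj => by
            rw [hu j, hOx j, if_pos hj]]
          simp [hm_def, mul_comm]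
        have h2 : ∑ j ∈ Mᶜ, u j * O x j = ((N:ℝ) - m) * ((1 / sN) * (C / sn)) := by
          rw [Finset.sum_congr rfl fun j hj => by
            rw [hu j, hOx j, if_neg (Finset.mem_compl.mp hj)]]
          rw [Finset.sum_const, Finset.card_compl]
          simp only [Fintype.card_fin, nsmul_eq_mul]
          rw [Nat.cast_sub hMN.le, hm_def]
        rw [h1, h2]; ring
      have hval : ∀ j, D (O x) j =
          2 * (inner ℝ u (O x) : ℝ) * (1 / sN) - O x j := by
        intro j
        rw [hD (O x)]
        have h3 : ((2 * (inner ℝ u (O x) : ℝ)) • u - O x) j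
            = (2 * (inner ℝ u (O x) : ℝ)) * u j - O x j := by simp
        rw [h3, hu j]
      rw [hstep, hval i, hOx i, hinner]
      have hφ : (2 * ((k:ℝ)+1) + 1) * θ = (2 * k + 1) * θ + 2 * θ := by ring
      have hsinφ : Real.sin ((2 * ((k:ℝ)+1) + 1) * θ) =
          S * (1 - 2 * Real.sin θ ^ 2) + C * (2 * Real.sin θ * Real.cos θ) := by
        rw [hφ, Real.sin_add, Real.cos_two_mul', Real.sin_two_mul, hS, hC]
        linear_combination Real.sin ((2 * (k:ℝ) + 1) * θ) * hpyth
      have hcosφ : Real.cos ((2 * ((k:ℝ)+1) + 1) * θ) =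
          C * (2 * Real.cos θ ^ 2 - 1) - S * (2 * Real.sin θ * Real.cos θ) := by
        rw [hφ, Real.cos_add, Real.cos_two_mul, Real.sin_two_mul, hS, hC]
      push_cast
      split
      · rw [hsinφ, ← hsn2, ← hsm2, hsmeq, hsneq]
        field_simp
        ring
      · rw [hcosφ, ← hsn2, ← hsm2, hsmeq, hsneq]
        field_simp
        ring
  intro k
  rw [Finset.sum_congr rfl fun i hi => by rw [key k i, if_pos hi]]
  rw [Finset.sum_const, nsmul_eq_mul, ← hm_def, div_pow, hsm2]
  field_simp
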